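/- If T has finite-dimensional kernel and cokernel and 1−T*T, 1−TT* are positive finite-rank operators, then dim range(1−T*T) − dim range(1−TT*) = dim ker T − dim ker T*. -/

import Mathlib

open ContinuousLinearMap Module LinearMap Submodule

private lemma rank_nullity_aux {H : Type*} [NormedAddCommGroup H]
    [InnerProductSpace ℂ H] (f : H →ₗ[ℂ] H) (p : Submodule ℂ H)
    [FiniteDimensional ℂ p] :
    finrank ℂ p = finrank ℂ (p.map f) + finrank ℂ (LinearMap.ker (f.domRestrict p)) := by
  have h := LinearMap.finrank_range_add_finrank_ker (f.domRestrict p)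
  rw [LinearMap.range_domRestrict] at h
  omega

theorem defect_rank_difference_eq_index {H : Type*} [NormedAddCommGroup H]
    [InnerProductSpace ℂ H] [CompleteSpace H]
    (T : H →L[ℂ] H) (hT : ‖T‖ ≤ 1)
    (hker : FiniteDimensional ℂ (LinearMap.ker (T : H →ₗ[ℂ] H)))
    (hcoker : FiniteDimensional ℂ (LinearMap.ker (ContinuousLinearMap.adjoint T : H →ₗ[ℂ] H)))
    (hfin1 : FiniteDimensional ℂ
      (LinearMap.range (((1 : H →L[ℂ] H) - ContinuousLinearMap.adjoint T * T : H →L[ℂ] H) : H →ₗ[ℂ] H)))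
    (hfin2 : FiniteDimensional ℂ
      (LinearMap.range (((1 : H →L[ℂ] H) - T * ContinuousLinearMap.adjoint T : H →L[ℂ] H) : H →ₗ[ℂ] H))) :
    (Module.finrank ℂ (LinearMap.range (((1 : H →L[ℂ] H) - ContinuousLinearMap.adjoint T * T : H →L[ℂ] H) : H →ₗ[ℂ] H)) : ℤ) -
        Module.finrank ℂ (LinearMap.range (((1 : H →L[ℂ] H) - T * ContinuousLinearMap.adjoint T : H →L[ℂ] H) : H →ₗ[ℂ] H)) =
      (Module.finrank ℂ (LinearMap.ker (T : H →ₗ[ℂ] H)) : ℤ) -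
        Module.finrank ℂ (LinearMap.ker (ContinuousLinearMap.adjoint T : H →ₗ[ℂ] H)) := by
  set S := ContinuousLinearMap.adjoint T with hS
  set A : H →L[ℂ] H := 1 - S * T with hA
  set B : H →L[ℂ] H := 1 - T * S with hB
  set K := LinearMap.range (A : H →ₗ[ℂ] H) with hK
  set L := LinearMap.range (B : H →ₗ[ℂ] H) with hL
  -- intertwining identities
  have hTA : T * A = B * T := by rw [hA, hB]; noncomm_ring
  have hSB : S * B = A * S := by rw [hA, hB]; noncomm_ring
  -- kernels are contained in the defect ranges
  have hkerK : LinearMap.ker (T : H →ₗ[ℂ] H) ≤ K := by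
    intro x hx
    refine ⟨x, ?_⟩
    have hx0 : T x = 0 := hx
    simp [hA, ContinuousLinearMap.sub_apply, ContinuousLinearMap.mul_apply, hx0]
  have hkerL : LinearMap.ker (S : H →ₗ[ℂ] H) ≤ L := by
    intro x hx
    refine ⟨x, ?_⟩
    have hx0 : S x = 0 := hx
    simp [hB, ContinuousLinearMap.sub_apply, ContinuousLinearMap.mul_apply, hx0]
  -- T maps K into L, S maps L into K
  have hmapK : K.map (T : H →ₗ[ℂ] H) ≤ L := by
    rintro _ ⟨_, ⟨z, rfl⟩, rfl⟩
    refine ⟨T z, ?_⟩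
    have := ContinuousLinearMap.ext_iff.mp hTA z
    simpa [ContinuousLinearMap.mul_apply] using this.symm
  have hmapL : L.map (S : H →ₗ[ℂ] H) ≤ K := by
    rintro _ ⟨_, ⟨z, rfl⟩, rfl⟩
    refine ⟨S z, ?_⟩
    have := ContinuousLinearMap.ext_iff.mp hSB z
    simpa [ContinuousLinearMap.mul_apply] using this.symm
  -- injectivity of S on ranges of T, and of T on ranges of S
  have hinjS : ∀ x : H, S (T x) = 0 → T x = 0 := by
    intro x hx
    have : (inner ℂ (T x) (T x) : ℂ) = 0 := by
      rw [← ContinuousLinearMap.adjoint_inner_left, ← hS, hx, inner_zero_left]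
    exact inner_self_eq_zero.mp this
  have hinjT : ∀ x : H, T (S x) = 0 → S x = 0 := by
    intro x hx
    have : (inner ℂ (S x) (S x) : ℂ) = 0 := by
      have : (ContinuousLinearMap.adjoint S) (S x) = 0 := by
        rw [hS, ContinuousLinearMap.adjoint_adjoint]; exact hx
      rw [← ContinuousLinearMap.adjoint_inner_left, this, inner_zero_left]
    exact inner_self_eq_zero.mp this
  haveI : FiniteDimensional ℂ K := hfin1
  haveI : FiniteDimensional ℂ L := hfin2
  haveI : FiniteDimensional ℂ (K.map (T : H →ₗ[ℂ] H)) := Module.Finite.map _ _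
  haveI : FiniteDimensional ℂ (L.map (S : H →ₗ[ℂ] H)) := Module.Finite.map _ _
  -- rank nullity for T|K and S|L
  have hrnK : finrank ℂ K = finrank ℂ (K.map (T : H →ₗ[ℂ] H)) + finrank ℂ (LinearMap.ker (T : H →ₗ[ℂ] H)) := by
    have h := rank_nullity_aux (T : H →ₗ[ℂ] H) K
    have hker_eq : LinearMap.ker ((T : H →ₗ[ℂ] H).domRestrict K) = comap K.subtype (LinearMap.ker (T : H →ₗ[ℂ] H)) := LinearMap.ker_domRestrict K _
    rw [h, hker_eq, (Submodule.comapSubtypeEquivOfLe hkerK).finrank_eq]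
  have hrnL : finrank ℂ L = finrank ℂ (L.map (S : H →ₗ[ℂ] H)) + finrank ℂ (LinearMap.ker (S : H →ₗ[ℂ] H)) := by
    have h := rank_nullity_aux (S : H →ₗ[ℂ] H) L
    have hker_eq : LinearMap.ker ((S : H →ₗ[ℂ] H).domRestrict L) = comap L.subtype (LinearMap.ker (S : H →ₗ[ℂ] H)) := LinearMap.ker_domRestrict L _
    rw [h, hker_eq, (Submodule.comapSubtypeEquivOfLe hkerL).finrank_eq]
  -- finrank (K.map T) = finrank (L.map S)
  have key : finrank ℂ (K.map (T : H →ₗ[ℂ] H)) = finrank ℂ (L.map (S : H →ₗ[ℂ] H)) := by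
    have h1 : finrank ℂ (K.map (T : H →ₗ[ℂ] H)) ≤ finrank ℂ (L.map (S : H →ₗ[ℂ] H)) := by
      have heq : finrank ℂ (K.map (T : H →ₗ[ℂ] H)) =
          finrank ℂ ((K.map (T : H →ₗ[ℂ] H)).map (S : H →ₗ[ℂ] H)) := by
        have h := rank_nullity_aux (S : H →ₗ[ℂ] H) (K.map (T : H →ₗ[ℂ] H))
        have hker0 : LinearMap.ker ((S : H →ₗ[ℂ] H).domRestrict (K.map (T : H →ₗ[ℂ] H))) = ⊥ := by
          rw [eq_bot_iff]
          intro z hz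
          obtain ⟨x, -, hx⟩ := z.2
          have hSy : S (z : H) = 0 := hz
          rw [← hx] at hSy
          have h0 : (z : H) = 0 := by rw [← hx]; exact hinjS x hSy
          simpa [Submodule.mem_bot] using Subtype.ext h0
        rw [h, hker0, finrank_bot, add_zero]
      rw [heq]
      exact Submodule.finrank_mono (Submodule.map_mono hmapK)
    have h2 : finrank ℂ (L.map (S : H →ₗ[ℂ] H)) ≤ finrank ℂ (K.map (T : H →ₗ[ℂ] H)) := by
      have heq : finrank ℂ (L.map (S : H →ₗ[ℂ] H)) =
          finrank ℂ ((L.map (S : H →ₗ[ℂ] H)).map (T : H →ₗ[ℂ] H)) := by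
        have h := rank_nullity_aux (T : H →ₗ[ℂ] H) (L.map (S : H →ₗ[ℂ] H))
        have hker0 : LinearMap.ker ((T : H →ₗ[ℂ] H).domRestrict (L.map (S : H →ₗ[ℂ] H))) = ⊥ := by
          rw [eq_bot_iff]
          intro z hz
          obtain ⟨x, -, hx⟩ := z.2
          have hTy : T (z : H) = 0 := hz
          rw [← hx] at hTy
          have h0 : (z : H) = 0 := by rw [← hx]; exact hinjT x hTy
          simpa [Submodule.mem_bot] using Subtype.ext h0
        rw [h, hker0, finrank_bot, add_zero]
      rw [heq]
      exact Submodule.finrank_mono (Submodule.map_mono hmapL)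
    omega
  rw [hrnK, hrnL, key]
  push_cast
  ring
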